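/- Let D be a locally nilpotent derivation on a commutative ring R containing ℚ, and suppose s ∈ R satisfies D(s) = 1. Then for every r ∈ R, the element π(r) := Σ_{n≥0} (-s)^n/n! · D^n(r) lies in the kernel of D, and π: R → ker(D) is a ring homomorphism restricting to the identity on ker(D) (the Dixmier map). -/
import Mathlib

open Finset

section dixAux
variable {R : Type*} [CommRing R] [Algebra ℚ R] (D : Derivation ℚ R R)

lemma dix_iter_zero {r : R} {N : ℕ} (h : (⇑D)^[N] r = 0) {n : ℕ} (hn : N ≤ n) :
    (⇑D)^[n] r = 0 := by
  obtain ⟨k, rfl⟩ := Nat.exists_eq_add_of_le hn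
  rw [add_comm, Function.iterate_add_apply, h]
  exact Function.iterate_fixed (map_zero D) k

lemma dix_mul (x y : R) : D (x * y) = D x * y + x * D y := by
  rw [D.leibniz]; simp only [smul_eq_mul]; ring

lemma dix_iter_add (a b : R) (n : ℕ) :
    (⇑D)^[n] (a + b) = (⇑D)^[n] a + (⇑D)^[n] b := by
  induction n with
  | zero => rfl
  | succ n ih =>
      rw [Function.iterate_succ_apply', Function.iterate_succ_apply',
        Function.iterate_succ_apply', ih, map_add]

lemma dix_leibniz (a b : R) (n : ℕ) :
    (⇑D)^[n] (a * b) =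
      ∑ k ∈ range n.succ, (n.choose k • ((⇑D)^[n - k] a * (⇑D)^[k] b)) := by
  induction n with
  | zero =>
    simp [Finset.range]
  | succ n IH =>
    calc
      (⇑D)^[n + 1] (a * b) =
          D (∑ k ∈ range n.succ,
              n.choose k • ((⇑D)^[n - k] a * (⇑D)^[k] b)) := by
        rw [Function.iterate_succ_apply', IH]
      _ = (∑ k ∈ range n.succ,
            n.choose k • ((⇑D)^[n - k + 1] a * (⇑D)^[k] b)) +
          ∑ k ∈ range n.succ,
            n.choose k • ((⇑D)^[n - k] a * (⇑D)^[k + 1] b) := by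
        simp_rw [map_sum, map_nsmul, dix_mul D, Function.iterate_succ_apply',
          smul_add, sum_add_distrib]
      _ = (∑ k ∈ range n.succ,
                n.choose k.succ • ((⇑D)^[n - k] a * (⇑D)^[k + 1] b)) +
              1 • ((⇑D)^[n + 1] a * (⇑D)^[0] b) +
            ∑ k ∈ range n.succ, n.choose k • ((⇑D)^[n - k] a * (⇑D)^[k + 1] b) :=
        ?_
      _ = ((∑ k ∈ range n.succ, n.choose k • ((⇑D)^[n - k] a * (⇑D)^[k + 1] b)) +
              ∑ k ∈ range n.succ,
                n.choose k.succ • ((⇑D)^[n - k] a * (⇑D)^[k + 1] b)) +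
            1 • ((⇑D)^[n + 1] a * (⇑D)^[0] b) := by
        rw [add_comm, add_assoc]
      _ = (∑ i ∈ range n.succ,
              (n + 1).choose (i + 1) • ((⇑D)^[n + 1 - (i + 1)] a * (⇑D)^[i + 1] b)) +
            1 • ((⇑D)^[n + 1] a * (⇑D)^[0] b) := by
        simp_rw [Nat.choose_succ_succ, Nat.succ_sub_succ, add_smul, sum_add_distrib]
      _ = ∑ k ∈ range n.succ.succ,
            n.succ.choose k • ((⇑D)^[n.succ - k] a * (⇑D)^[k] b) := by
        rw [sum_range_succ' _ n.succ, Nat.choose_zero_right, tsub_zero]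
    congr
    refine (sum_range_succ' _ _).trans (congr_arg₂ (· + ·) ?_ ?_)
    · rw [sum_range_succ, Nat.choose_succ_self, zero_smul, add_zero]
      refine sum_congr rfl fun k hk => ?_
      rw [mem_range] at hk
      congr
      omega
    · rw [Nat.choose_zero_right, tsub_zero]

end dixAux

theorem stmt_17 {R : Type*} [CommRing R] [Algebra ℚ R]
    (D : Derivation ℚ R R)
    (hln : ∀ r : R, ∃ n : ℕ, (⇑D)^[n] r = 0)
    (s : R) (hs : D s = 1) :
    let π : R → R := fun r => ∑ᶠ n : ℕ, ((n.factorial : ℚ)⁻¹) • ((-s) ^ n * (⇑D)^[n] r)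
    (∀ r, D (π r) = 0) ∧ (∀ a b, π (a * b) = π a * π b) ∧ (∀ a b, π (a + b) = π a + π b)
      ∧ π 1 = 1 ∧ ∀ a, D a = 0 → π a = a := by
  intro π
  set T : R → ℕ → R := fun r n => ((n.factorial : ℚ)⁻¹) • ((-s) ^ n * (⇑D)^[n] r) with hT
  have hπ : ∀ (r : R) (N : ℕ), (⇑D)^[N] r = 0 → π r = ∑ n ∈ range N, T r n := by
    intro r N hN
    refine finsum_eq_sum_of_support_subset _ ?_
    intro n hn
    simp only [Function.mem_support, Set.mem_setOf_eq] at hn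
    by_contra hc
    simp only [coe_range, Set.mem_Iio, not_lt] at hc
    exact hn (by simp [hT, dix_iter_zero D hN hc])
  constructor
  · -- D (π r) = 0
    intro r
    obtain ⟨N, hN⟩ := hln r
    rw [hπ r N hN, map_sum]
    set w : ℕ → R := fun n =>
      if n = 0 then 0 else (((n-1).factorial : ℚ)⁻¹) • ((-s)^(n-1) * (⇑D)^[n] r) with hw
    have key : ∀ n, D (T r n) = w (n+1) - w n := by
      intro n
      have h1 : D (T r n) = ((n.factorial : ℚ)⁻¹) •
          (D ((-s)^n) * (⇑D)^[n] r + (-s)^n * (⇑D)^[n+1] r) := by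
        simp only [hT]
        rw [D.map_smul, dix_mul, Function.iterate_succ_apply']
      have h2 : D ((-s)^n) = ((n : ℕ) : ℚ) • ((-s)^(n-1) * (-1)) := by
        rw [D.leibniz_pow, Nat.cast_smul_eq_nsmul]
        simp [hs, smul_eq_mul]
      simp only [hw]
      match n with
      | 0 =>
        rw [h1]
        simp [hT]
      | (m+1) =>
        have hfac : (((m+1).factorial : ℚ))⁻¹ * (((m+1 : ℕ)) : ℚ)
            = ((m.factorial : ℚ))⁻¹ := by
          rw [Nat.factorial_succ]
          push_cast
          rw [mul_inv]
          field_simp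
        rw [h1, h2]
        simp only [Nat.add_sub_cancel, Nat.succ_ne_zero, if_neg, if_false]
        rw [smul_mul_assoc, smul_add, smul_smul, hfac]
        have : (-s) ^ m * -1 * (⇑D)^[m + 1] r = -((-s) ^ m * (⇑D)^[m + 1] r) := by ring
        rw [this, smul_neg]
        abel
    calc ∑ n ∈ range N, D (T r n) = ∑ n ∈ range N, (w (n+1) - w n) :=
          sum_congr rfl fun n _ => key n
      _ = w N - w 0 := sum_range_sub w N
      _ = 0 := by
        simp only [hw]
        match N with
        | 0 => simp
        | (m+1) => simp [hN]
  refine ⟨?_, ?_, ?_, ?_⟩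
  · -- multiplicative
    intro a b
    obtain ⟨N, hNa'⟩ := hln a
    obtain ⟨M, hMb'⟩ := hln b
    set K := N + M with hK
    have hNa : (⇑D)^[N] a = 0 := hNa'
    have hMb : (⇑D)^[M] b = 0 := hMb'
    have hab : (⇑D)^[K] (a * b) = 0 := by
      rw [dix_leibniz]
      refine sum_eq_zero fun k hk => ?_
      rw [mem_range, Nat.lt_succ_iff] at hk
      by_cases h : M ≤ k
      · simp [dix_iter_zero D hMb h]
      · have hN' : N ≤ K - k := by omega
        simp [dix_iter_zero D hNa hN']
    rw [hπ (a * b) K hab, hπ a K (dix_iter_zero D hNa (Nat.le_add_right _ _)),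
      hπ b K (dix_iter_zero D hMb (Nat.le_add_left _ _))]
    set g : ℕ → ℕ → R := fun i j =>
      ((i.factorial : ℚ)⁻¹ * (j.factorial : ℚ)⁻¹) •
        ((-s) ^ (i + j) * ((⇑D)^[i] a * (⇑D)^[j] b)) with hg
    have hg0 : ∀ i j, K ≤ i + j → g i j = 0 := by
      intro i j hij
      have : N ≤ i ∨ M ≤ j := by omega
      rcases this with h | h
      · simp [hg, dix_iter_zero D hNa h]
      · simp [hg, dix_iter_zero D hMb h]
    have step1 : ∀ n, T (a * b) n = ∑ k ∈ range (n + 1), g (n - k) k := by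
      intro n
      rw [hT]
      simp only [dix_leibniz D a b n, Nat.succ_eq_add_one, mul_sum, smul_sum]
      refine sum_congr rfl fun k hk => ?_
      rw [mem_range, Nat.lt_succ_iff] at hk
      have hpow : (-s) ^ n = (-s) ^ ((n - k) + k) := by rw [Nat.sub_add_cancel hk]
      have hfac : (n.factorial : ℚ)⁻¹ * (n.choose k : ℚ)
          = ((n - k).factorial : ℚ)⁻¹ * (k.factorial : ℚ)⁻¹ := by
        have h := Nat.choose_mul_factorial_mul_factorial hk
        have h' : ((n.choose k : ℚ)) * (k.factorial : ℚ) * ((n - k).factorial : ℚ)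
            = (n.factorial : ℚ) := by exact_mod_cast congrArg Nat.cast h
        field_simp
        nlinarith [h']
      rw [hg, hpow]
      rw [← Nat.cast_smul_eq_nsmul ℚ, mul_smul_comm, smul_smul, hfac]
    rw [sum_congr rfl fun n _ => step1 n]
    have flip := sum_range_diag_flip K (fun x y => g y x)
    rw [flip]
    have step2 : ∀ m ∈ range K, ∑ k ∈ range (K - m), g k m = ∑ k ∈ range K, g k m := by
      intro m _
      refine sum_subset (range_subset_range.2 (Nat.sub_le _ _)) ?_
      intro k _ hk
      rw [mem_range, not_lt] at hk
      exact hg0 k m (by omega)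
    rw [sum_congr rfl step2]
    rw [sum_mul_sum]
    rw [Finset.sum_comm]
    refine sum_congr rfl fun m _ => sum_congr rfl fun k _ => ?_
    simp only [hT, hg]
    rw [mul_smul_comm, smul_mul_assoc, smul_smul, pow_add]
    congr 1
    · ring
    · ring
  · -- additive
    intro a b
    obtain ⟨N, hNa⟩ := hln a
    obtain ⟨M, hMb⟩ := hln b
    have ha : (⇑D)^[max N M] a = 0 := dix_iter_zero D hNa (le_max_left _ _)
    have hb : (⇑D)^[max N M] b = 0 := dix_iter_zero D hMb (le_max_right _ _)
    have hab : (⇑D)^[max N M] (a + b) = 0 := by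
      rw [dix_iter_add, ha, hb, add_zero]
    rw [hπ a _ ha, hπ b _ hb, hπ (a+b) _ hab, ← sum_add_distrib]
    refine sum_congr rfl fun n _ => ?_
    simp [hT, dix_iter_add, mul_add, smul_add]
  · -- π 1 = 1
    have h1 : (⇑D)^[1] (1 : R) = 0 := by simp
    rw [hπ 1 1 h1]
    simp [hT]
  · -- identity on ker
    intro a ha
    have h1 : (⇑D)^[1] a = 0 := by simpa using ha
    rw [hπ a 1 h1]
    simp [hT]
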